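/- arXiv:2102.06818 — 2 statements merged into one kernel-verified Lean document; each statement's English description precedes it below -/
import Mathlib

section
/- Let A be a real symmetric matrix, λ an eigenvalue of A with unit eigenvector u, and let v be a unit vector with ⟨v, u⟩ ≠ 0. Writing μ = ⟨Av, v⟩, one has |μ − λ| ≤ ‖A − λI‖ · sin²∠(v, u) · C for C = 2‖A‖/|⟨v,u⟩|²; more simply: |μ − λ| ≤ 2‖A‖ sin²∠(v,u) when sin∠(v,u) ≤ 1/√2, i.e., the Rayleigh quotient error is quadratic in the eigenvector angle error. -/
open Matrix

/-- Euclidean norm on `ℝⁿ`. -/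
noncomputable def euclidNorm {n : ℕ} (v : Fin n → ℝ) : ℝ :=
  Real.sqrt (v ⬝ᵥ v)

/-- Operator norm induced by the Euclidean norm. -/
noncomputable def eOpNorm {n : ℕ} (T : Matrix (Fin n) (Fin n) ℝ) : ℝ :=
  sSup {r : ℝ | ∃ v : Fin n → ℝ, euclidNorm v = 1 ∧ r = euclidNorm (T *ᵥ v)}

lemma euclidNorm_eq_norm {n : ℕ} (x : Fin n → ℝ) :
    euclidNorm x = @norm (EuclideanSpace ℝ (Fin n)) _ (WithLp.toLp 2 x) := by
  rw [EuclideanSpace.norm_eq, euclidNorm]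
  simp [dotProduct, sq]

lemma dot_eq_inner {n : ℕ} (x y : Fin n → ℝ) :
    x ⬝ᵥ y = @inner ℝ (EuclideanSpace ℝ (Fin n)) _ (WithLp.toLp 2 x) (WithLp.toLp 2 y) := by
  simp [PiLp.inner_apply, dotProduct, mul_comm]

lemma abs_dot_le {n : ℕ} (x y : Fin n → ℝ) :
    |x ⬝ᵥ y| ≤ euclidNorm x * euclidNorm y := by
  rw [dot_eq_inner, euclidNorm_eq_norm, euclidNorm_eq_norm]
  exact abs_real_inner_le_norm _ _

lemma euclidNorm_smul {n : ℕ} (a : ℝ) (x : Fin n → ℝ) :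
    euclidNorm (a • x) = |a| * euclidNorm x := by
  rw [euclidNorm_eq_norm, euclidNorm_eq_norm, WithLp.toLp_smul]
  exact norm_smul a (_ : EuclideanSpace ℝ (Fin n))

lemma eOpNorm_bddAbove {n : ℕ} (A : Matrix (Fin n) (Fin n) ℝ) :
    BddAbove {r : ℝ | ∃ v : Fin n → ℝ, euclidNorm v = 1 ∧ r = euclidNorm (A *ᵥ v)} := by
  set L : EuclideanSpace ℝ (Fin n) →L[ℝ] EuclideanSpace ℝ (Fin n) :=
    LinearMap.toContinuousLinearMap (Matrix.toEuclideanLin A)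
  refine ⟨‖L‖, ?_⟩
  rintro r ⟨x, hx, rfl⟩
  have hLx : L (WithLp.toLp 2 x) = WithLp.toLp 2 (A *ᵥ x) := by
    simp only [L, LinearMap.coe_toContinuousLinearMap', Matrix.toEuclideanLin_apply]
  have := L.le_opNorm (WithLp.toLp 2 x)
  rw [hLx, ← euclidNorm_eq_norm, ← euclidNorm_eq_norm, hx, mul_one] at this
  exact this

lemma le_eOpNorm {n : ℕ} (A : Matrix (Fin n) (Fin n) ℝ) (x : Fin n → ℝ)
    (hx : euclidNorm x = 1) : euclidNorm (A *ᵥ x) ≤ eOpNorm A :=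
  le_csSup (eOpNorm_bddAbove A) ⟨x, hx, rfl⟩

theorem rayleigh_quotient_quadratic_accuracy
    {n : ℕ} (A : Matrix (Fin n) (Fin n) ℝ) (hA : A.IsHermitian)
    (lam : ℝ) (u : Fin n → ℝ) (hu : A *ᵥ u = lam • u) (hunorm : euclidNorm u = 1)
    (v : Fin n → ℝ) (hvnorm : euclidNorm v = 1) (hvu : v ⬝ᵥ u ≠ 0)
    (μ : ℝ) (hμ : μ = A *ᵥ v ⬝ᵥ v)
    (hsin : 1 - (v ⬝ᵥ u) ^ 2 ≤ 1 / 2) :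
    |μ - lam| ≤ 2 * eOpNorm A * (1 - (v ⬝ᵥ u) ^ 2) := by
  have hsymm : Aᵀ = A := by
    have := hA.eq
    simpa [Matrix.conjTranspose_eq_transpose_of_trivial] using this
  have hud : u ⬝ᵥ u = 1 := by
    have h0 : 0 ≤ u ⬝ᵥ u := by
      rw [dot_eq_inner]; exact real_inner_self_nonneg
    have := congrArg (· ^ 2) hunorm
    simpa [euclidNorm, Real.sq_sqrt h0] using this
  have hvd : v ⬝ᵥ v = 1 := by
    have h0 : 0 ≤ v ⬝ᵥ v := by
      rw [dot_eq_inner]; exact real_inner_self_nonneg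
    have := congrArg (· ^ 2) hvnorm
    simpa [euclidNorm, Real.sq_sqrt h0] using this
  set c : ℝ := v ⬝ᵥ u with hc
  set w : Fin n → ℝ := v - c • u with hw
  have hwu : w ⬝ᵥ u = 0 := by
    simp [hw, sub_dotProduct, smul_dotProduct, hud, hc]
  have huw : u ⬝ᵥ w = 0 := by rw [dotProduct_comm]; exact hwu
  have hvw : v = c • u + w := by simp [hw]
  have hww : w ⬝ᵥ w = 1 - c ^ 2 := by
    simp only [hw, sub_dotProduct, dotProduct_sub, smul_dotProduct,
      dotProduct_smul, hud, hvd, smul_eq_mul, ← hc, dotProduct_comm u v, ← hc]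
    ring
  have hAwu : (A *ᵥ w) ⬝ᵥ u = 0 := by
    rw [dotProduct_comm, dotProduct_mulVec, ← Matrix.mulVec_transpose, hsymm, hu,
      smul_dotProduct, huw, smul_eq_mul, mul_zero]
  have hmu : μ = c ^ 2 * lam + (A *ᵥ w) ⬝ᵥ w := by
    rw [hμ, hvw]
    simp only [mulVec_add, mulVec_smul, hu, add_dotProduct, dotProduct_add,
      smul_dotProduct, dotProduct_smul, smul_eq_mul, hud, huw, hAwu]
    ring
  -- bound on |lam|
  have hAu : euclidNorm (A *ᵥ u) = |lam| := by
    rw [hu, euclidNorm_smul, hunorm, mul_one]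
  have hlam : |lam| ≤ eOpNorm A := by
    rw [← hAu]; exact le_eOpNorm A u hunorm
  have hN0 : 0 ≤ eOpNorm A := le_trans (abs_nonneg lam) hlam
  have hww0 : 0 ≤ w ⬝ᵥ w := by
    rw [dot_eq_inner]; exact real_inner_self_nonneg
  -- Rayleigh bound for w
  have hRay : |(A *ᵥ w) ⬝ᵥ w| ≤ eOpNorm A * (w ⬝ᵥ w) := by
    by_cases hw0 : w = 0
    · simp [hw0]
    · have hwwpos : 0 < w ⬝ᵥ w := by
        rcases lt_or_eq_of_le hww0 with h | h
        · exact h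
        · exact absurd ((dotProduct_self_eq_zero).1 h.symm) hw0
      set t : ℝ := euclidNorm w with ht
      have htpos : 0 < t := Real.sqrt_pos.2 hwwpos
      have ht2 : t ^ 2 = w ⬝ᵥ w := Real.sq_sqrt hww0
      have hw' : euclidNorm (t⁻¹ • w) = 1 := by
        rw [euclidNorm_smul, abs_of_pos (inv_pos.2 htpos), ← ht, inv_mul_cancel₀ htpos.ne']
      have hCS : |(A *ᵥ (t⁻¹ • w)) ⬝ᵥ (t⁻¹ • w)| ≤ eOpNorm A := by
        calc |(A *ᵥ (t⁻¹ • w)) ⬝ᵥ (t⁻¹ • w)|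
            ≤ euclidNorm (A *ᵥ (t⁻¹ • w)) * euclidNorm (t⁻¹ • w) := abs_dot_le _ _
          _ = euclidNorm (A *ᵥ (t⁻¹ • w)) := by rw [hw', mul_one]
          _ ≤ eOpNorm A := le_eOpNorm A _ hw'
      have hexp : (A *ᵥ (t⁻¹ • w)) ⬝ᵥ (t⁻¹ • w) = t⁻¹ * t⁻¹ * ((A *ᵥ w) ⬝ᵥ w) := by
        rw [mulVec_smul, smul_dotProduct, dotProduct_smul]
        simp [mul_assoc]
      rw [hexp, abs_mul, abs_mul, abs_of_pos (inv_pos.2 htpos)] at hCS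
      have : |(A *ᵥ w) ⬝ᵥ w| ≤ eOpNorm A * t ^ 2 := by
        have h := mul_le_mul_of_nonneg_left hCS (le_of_lt (mul_pos htpos htpos))
        calc |(A *ᵥ w) ⬝ᵥ w| = t * t * (t⁻¹ * t⁻¹ * |(A *ᵥ w) ⬝ᵥ w|) := by
              field_simp
          _ ≤ t * t * eOpNorm A := h
          _ = eOpNorm A * t ^ 2 := by ring
      rwa [ht2] at this
  -- conclude
  have hs : 0 ≤ 1 - c ^ 2 := hww ▸ hww0
  calc |μ - lam| = |(c ^ 2 - 1) * lam + (A *ᵥ w) ⬝ᵥ w| := by rw [hmu]; ring_nf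
    _ ≤ |(c ^ 2 - 1) * lam| + |(A *ᵥ w) ⬝ᵥ w| := abs_add_le _ _
    _ = (1 - c ^ 2) * |lam| + |(A *ᵥ w) ⬝ᵥ w| := by
        rw [abs_mul, abs_of_nonpos (by linarith : c ^ 2 - 1 ≤ 0)]; ring_nf
    _ ≤ (1 - c ^ 2) * eOpNorm A + eOpNorm A * (w ⬝ᵥ w) := by
        exact add_le_add (mul_le_mul_of_nonneg_left hlam hs) hRay
    _ = 2 * eOpNorm A * (1 - c ^ 2) := by rw [hww]; ring
end

section
/- Let (μⁿ) be the sequence of Rayleigh quotients generated by inverse iteration vⁿ⁺¹ = A⁻¹vⁿ / ‖A⁻¹vⁿ‖ for a symmetric positive definite matrix A, with μⁿ = ⟨Avⁿ, vⁿ⟩. Then the sequence (μⁿ) is non-increasing and bounded below by the smallest eigenvalue λ₁ of A, hence convergent. -/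
open Matrix Filter

/-- Euclidean norm on `ℝⁿ`. -/
noncomputable def enorm' {n : ℕ} (v : Fin n → ℝ) : ℝ :=
  Real.sqrt (v ⬝ᵥ v)

section aux

variable {n : ℕ}

lemma dot_self_nonneg (x : Fin n → ℝ) : 0 ≤ x ⬝ᵥ x :=
  Finset.sum_nonneg fun i _ => mul_self_nonneg (x i)

lemma dot_cs (x y : Fin n → ℝ) : (x ⬝ᵥ y) ^ 2 ≤ (x ⬝ᵥ x) * (y ⬝ᵥ y) := by
  have := Finset.sum_mul_sq_le_sq_mul_sq Finset.univ x y
  simpa [dotProduct, sq] using this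

lemma symm_dot_swap {M : Matrix (Fin n) (Fin n) ℝ} (hM : Mᵀ = M) (x y : Fin n → ℝ) :
    (M *ᵥ x) ⬝ᵥ y = x ⬝ᵥ (M *ᵥ y) := by
  rw [dotProduct_comm, Matrix.dotProduct_mulVec, ← Matrix.mulVec_transpose, hM,
    dotProduct_comm]

open scoped MatrixOrder in
/-- Generalized Cauchy–Schwarz inequality for a positive semidefinite matrix. -/
lemma psd_cs {A : Matrix (Fin n) (Fin n) ℝ} (hA : A.PosSemidef) (x y : Fin n → ℝ) :
    ((A *ᵥ x) ⬝ᵥ y) ^ 2 ≤ ((A *ᵥ x) ⬝ᵥ x) * ((A *ᵥ y) ⬝ᵥ y) := by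
  set S := CFC.sqrt A with hS
  have hsymm : Sᵀ = S := (CFC.sqrt_nonneg A).posSemidef.1
  have hmul : ∀ z : Fin n → ℝ, A *ᵥ z = S *ᵥ (S *ᵥ z) := by
    intro z
    rw [Matrix.mulVec_mulVec, CFC.sqrt_mul_sqrt_self A hA.nonneg]
  have h1 : (A *ᵥ x) ⬝ᵥ y = (S *ᵥ x) ⬝ᵥ (S *ᵥ y) := by
    rw [hmul, symm_dot_swap hsymm, dotProduct_comm, symm_dot_swap hsymm,
      dotProduct_comm]
  have h2 : (A *ᵥ x) ⬝ᵥ x = (S *ᵥ x) ⬝ᵥ (S *ᵥ x) := by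
    rw [hmul, symm_dot_swap hsymm, dotProduct_comm]
  have h3 : (A *ᵥ y) ⬝ᵥ y = (S *ᵥ y) ⬝ᵥ (S *ᵥ y) := by
    rw [hmul, symm_dot_swap hsymm, dotProduct_comm]
  rw [h1, h2, h3]
  exact dot_cs _ _

/-- Matrix transpose moves across the dot product. -/
lemma tdot {M : Matrix (Fin n) (Fin n) ℝ} (a b : Fin n → ℝ) :
    (Mᵀ *ᵥ a) ⬝ᵥ b = a ⬝ᵥ (M *ᵥ b) := by
  rw [Matrix.mulVec_transpose, Matrix.dotProduct_mulVec]

/-- Rayleigh quotient lower bound by the infimum of eigenvalues. -/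
lemma rayleigh_lower (hn : 0 < n) {A : Matrix (Fin n) (Fin n) ℝ} (hA : A.PosDef)
    (x : Fin n → ℝ) (hx : x ⬝ᵥ x = 1) :
    (⨅ i, hA.1.eigenvalues i) ≤ (A *ᵥ x) ⬝ᵥ x := by
  haveI : Nonempty (Fin n) := ⟨⟨0, hn⟩⟩
  have hspec := hA.1.spectral_theorem
  let U : Matrix (Fin n) (Fin n) ℝ := (Matrix.IsHermitian.eigenvectorUnitary hA.1 : Matrix (Fin n) (Fin n) ℝ)
  have hstarU : star U = Uᵀ := by
    rw [Matrix.star_eq_conjTranspose, Matrix.conjTranspose_eq_transpose_of_trivial]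
  have hUU : U * star U = 1 :=
    Matrix.mem_unitaryGroup_iff.mp (Matrix.IsHermitian.eigenvectorUnitary hA.1).2
  have hD : Matrix.diagonal (RCLike.ofReal ∘ hA.1.eigenvalues) =
      (Matrix.diagonal hA.1.eigenvalues : Matrix (Fin n) (Fin n) ℝ) := by
    congr 1
  have hspec' : A = U * Matrix.diagonal hA.1.eigenvalues * Uᵀ := by
    rw [← hD, ← hstarU]; exact hspec
  have hUy : ∀ z : Fin n → ℝ, U *ᵥ (Uᵀ *ᵥ z) = z := by
    intro z
    rw [Matrix.mulVec_mulVec, ← hstarU, hUU, Matrix.one_mulVec]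
  have hyy : (Uᵀ *ᵥ x) ⬝ᵥ (Uᵀ *ᵥ x) = 1 := by
    rw [tdot, hUy, hx]
  have hAx : (A *ᵥ x) ⬝ᵥ x =
      ∑ i, hA.1.eigenvalues i * ((Uᵀ *ᵥ x) i * (Uᵀ *ᵥ x) i) := by
    have h0 : (A *ᵥ x) ⬝ᵥ x = ((U * Matrix.diagonal hA.1.eigenvalues * Uᵀ) *ᵥ x) ⬝ᵥ x := by
      rw [← hspec']
    rw [h0, ← Matrix.mulVec_mulVec, ← Matrix.mulVec_mulVec,
      dotProduct_comm, ← tdot (M := U)]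
    simp only [dotProduct, Matrix.mulVec_diagonal]
    exact Finset.sum_congr rfl fun i _ => by ring
  rw [hAx]
  have hbdd : BddBelow (Set.range hA.1.eigenvalues) := Set.Finite.bddBelow (Set.finite_range _)
  have hle : ∀ i, (⨅ j, hA.1.eigenvalues j) ≤ hA.1.eigenvalues i := fun i => ciInf_le hbdd i
  have hysum : ∑ i, (Uᵀ *ᵥ x) i * (Uᵀ *ᵥ x) i = 1 := hyy
  calc (⨅ i, hA.1.eigenvalues i)
      = ∑ i, (⨅ j, hA.1.eigenvalues j) * ((Uᵀ *ᵥ x) i * (Uᵀ *ᵥ x) i) := by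
        rw [← Finset.mul_sum, hysum, mul_one]
    _ ≤ ∑ i, hA.1.eigenvalues i * ((Uᵀ *ᵥ x) i * (Uᵀ *ᵥ x) i) :=
        Finset.sum_le_sum fun i _ => mul_le_mul_of_nonneg_right (hle i) (mul_self_nonneg _)

end aux

theorem inverse_iteration_rayleigh_monotone_convergent
    {n : ℕ} (hn : 0 < n) (A : Matrix (Fin n) (Fin n) ℝ) (hA : A.PosDef)
    (v : ℕ → (Fin n → ℝ)) (hv0 : enorm' (v 0) = 1)
    (hrec : ∀ k : ℕ, v (k + 1) = (enorm' (A⁻¹ *ᵥ v k))⁻¹ • (A⁻¹ *ᵥ v k))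
    (μ : ℕ → ℝ) (hμ : ∀ k, μ k = A *ᵥ v k ⬝ᵥ v k)
    (lam1 : ℝ) (hlam1 : lam1 = ⨅ i, hA.1.eigenvalues i) :
    (∀ k : ℕ, μ (k + 1) ≤ μ k) ∧ (∀ k : ℕ, lam1 ≤ μ k) ∧
      ∃ L : ℝ, Tendsto μ atTop (nhds L) := by
  have hdet : IsUnit A.det := hA.det_pos.ne'.isUnit
  have hAinv : ∀ x : Fin n → ℝ, A *ᵥ (A⁻¹ *ᵥ x) = x := by
    intro x
    rw [Matrix.mulVec_mulVec, Matrix.mul_nonsing_inv A hdet, Matrix.one_mulVec]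
  -- all iterates are unit vectors
  have hunit : ∀ k, v k ⬝ᵥ v k = 1 := by
    intro k
    induction k with
    | zero =>
      have h : Real.sqrt (v 0 ⬝ᵥ v 0) = 1 := hv0
      nlinarith [Real.sq_sqrt (dot_self_nonneg (v 0)), h]
    | succ k ih =>
      have hvk_ne : v k ≠ 0 := by
        intro h
        rw [h] at ih; simp at ih
      have hu_ne : A⁻¹ *ᵥ v k ≠ 0 := by
        intro h
        apply hvk_ne
        rw [← hAinv (v k), h, Matrix.mulVec_zero]
      have huu_pos : 0 < (A⁻¹ *ᵥ v k) ⬝ᵥ (A⁻¹ *ᵥ v k) :=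
        lt_of_le_of_ne (dot_self_nonneg _) fun h =>
          hu_ne (dotProduct_self_eq_zero.mp h.symm)
      have hc2 : enorm' (A⁻¹ *ᵥ v k) * enorm' (A⁻¹ *ᵥ v k) = (A⁻¹ *ᵥ v k) ⬝ᵥ (A⁻¹ *ᵥ v k) :=
        Real.mul_self_sqrt (dot_self_nonneg _)
      rw [hrec k, smul_dotProduct, dotProduct_smul, smul_eq_mul, smul_eq_mul,
        ← mul_assoc, ← mul_inv, hc2]
      exact inv_mul_cancel₀ huu_pos.ne'
  -- key monotonicity fact
  have hmono : ∀ k, μ (k + 1) ≤ μ k := by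
    intro k
    have hww : v k ⬝ᵥ v k = 1 := hunit k
    have hw_ne : v k ≠ 0 := by intro h; rw [h] at hww; simp at hww
    have hu_ne : A⁻¹ *ᵥ v k ≠ 0 := by
      intro h
      apply hw_ne
      rw [← hAinv (v k), h, Matrix.mulVec_zero]
    have hAu : A *ᵥ (A⁻¹ *ᵥ v k) = v k := hAinv (v k)
    have huu_pos : 0 < (A⁻¹ *ᵥ v k) ⬝ᵥ (A⁻¹ *ᵥ v k) :=
      lt_of_le_of_ne (dot_self_nonneg _) fun h =>
        hu_ne (dotProduct_self_eq_zero.mp h.symm)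
    have hc2 : enorm' (A⁻¹ *ᵥ v k) * enorm' (A⁻¹ *ᵥ v k) = (A⁻¹ *ᵥ v k) ⬝ᵥ (A⁻¹ *ᵥ v k) :=
      Real.mul_self_sqrt (dot_self_nonneg _)
    have hαpos : 0 < v k ⬝ᵥ (A⁻¹ *ᵥ v k) := by
      have h := hA.dotProduct_mulVec_pos hu_ne
      have hstar : star (A⁻¹ *ᵥ v k) = A⁻¹ *ᵥ v k := by
        funext i; simp
      rw [hstar, hAu, dotProduct_comm] at h
      exact h
    have hμk1 : μ (k + 1) = ((A⁻¹ *ᵥ v k) ⬝ᵥ (A⁻¹ *ᵥ v k))⁻¹ * (v k ⬝ᵥ (A⁻¹ *ᵥ v k)) := by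
      rw [hμ (k + 1), hrec k, Matrix.mulVec_smul, smul_dotProduct,
        dotProduct_smul, hAu, smul_eq_mul, smul_eq_mul, ← mul_assoc, ← mul_inv, hc2]
    have hcs1 : (v k ⬝ᵥ (A⁻¹ *ᵥ v k)) ^ 2 ≤ (A⁻¹ *ᵥ v k) ⬝ᵥ (A⁻¹ *ᵥ v k) := by
      have h := dot_cs (v k) (A⁻¹ *ᵥ v k)
      rw [hww, one_mul] at h
      exact h
    have hcs2 : 1 ≤ (v k ⬝ᵥ (A⁻¹ *ᵥ v k)) * μ k := by
      have hgen := psd_cs hA.posSemidef (A⁻¹ *ᵥ v k) (v k)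
      rw [hAu, hww, ← hμ k] at hgen
      simpa using hgen
    have hμk_pos : 0 < μ k := by nlinarith [hcs2, hαpos]
    have key : v k ⬝ᵥ (A⁻¹ *ᵥ v k) ≤ ((A⁻¹ *ᵥ v k) ⬝ᵥ (A⁻¹ *ᵥ v k)) * μ k := by
      nlinarith [mul_le_mul_of_nonneg_right hcs1 hμk_pos.le,
        mul_le_mul_of_nonneg_left hcs2 hαpos.le]
    rw [hμk1]
    calc ((A⁻¹ *ᵥ v k) ⬝ᵥ (A⁻¹ *ᵥ v k))⁻¹ * (v k ⬝ᵥ (A⁻¹ *ᵥ v k))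
        ≤ ((A⁻¹ *ᵥ v k) ⬝ᵥ (A⁻¹ *ᵥ v k))⁻¹ * (((A⁻¹ *ᵥ v k) ⬝ᵥ (A⁻¹ *ᵥ v k)) * μ k) :=
          mul_le_mul_of_nonneg_left key (inv_nonneg.mpr huu_pos.le)
      _ = μ k := by rw [← mul_assoc, inv_mul_cancel₀ huu_pos.ne', one_mul]
  have hlb : ∀ k, lam1 ≤ μ k := by
    intro k
    rw [hlam1, hμ k]
    exact rayleigh_lower hn hA (v k) (hunit k)
  refine ⟨hmono, hlb, ?_⟩
  have hanti : Antitone μ := antitone_nat_of_succ_le hmono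
  have hbdd : BddBelow (Set.range μ) := ⟨lam1, fun x ⟨k, hk⟩ => hk ▸ hlb k⟩
  exact ⟨⨅ k, μ k, tendsto_atTop_ciInf hanti hbdd⟩
end
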